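/- arXiv:2205.13200 — 6 statements merged into one kernel-verified Lean document; each statement's English description precedes it below -/
import Mathlib

section
/- Let p̂ be the isotonic least-squares fit of d ∈ ℝ^n. Then for every function h : ℝ → ℝ, ∑_{i=1}^n (d_i − p̂_i) h(p̂_i) = 0; that is, the isotonic fit exactly balances the residuals against any function of the fitted values. -/
open Finset

/-- `p` is the isotonic least-squares fit of `d`. -/
def IsIsoFit {n : ℕ} (d p : Fin n → ℝ) : Prop :=
  Monotone p ∧ ∀ q : Fin n → ℝ, Monotone q →
    ∑ i, (d i - p i) ^ 2 ≤ ∑ i, (d i - q i) ^ 2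

lemma level_sum {n : ℕ} (d p : Fin n → ℝ) (hp : IsIsoFit d p) (c : ℝ) :
    ∑ i ∈ univ.filter (fun i => p i = c), (d i - p i) = 0 := by
  classical
  set T := univ.filter (fun i : Fin n => p i = c) with hT
  by_cases hTe : T = ∅
  · simp [hTe]
  have hTne : T.Nonempty := Finset.nonempty_of_ne_empty hTe
  set m : ℕ := T.card with hm
  have hmpos : 0 < (m : ℝ) := by exact_mod_cast Finset.card_pos.mpr hTne
  set S := ∑ i ∈ T, (d i - p i) with hS
  by_contra hSne
  have hSpos : 0 < |S| := abs_pos.mpr hSne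
  set U := (univ.filter (fun i : Fin n => p i ≠ c)).image (fun i => |p i - c|) with hU
  have hUpos : ∀ x ∈ U, 0 < x := by
    intro x hx
    simp only [hU, Finset.mem_image, Finset.mem_filter] at hx
    obtain ⟨i, ⟨_, hi⟩, rfl⟩ := hx
    exact abs_pos.mpr (sub_ne_zero.mpr hi)
  set δ : ℝ := if hUn : U.Nonempty then U.min' hUn else 1 with hδdef
  have hδpos : 0 < δ := by
    by_cases hUn : U.Nonempty
    · simp only [hδdef, dif_pos hUn]
      exact hUpos _ (U.min'_mem hUn)
    · simp [hδdef, dif_neg hUn]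
  have hδle : ∀ i, p i ≠ c → δ ≤ |p i - c| := by
    intro i hi
    have hmem : |p i - c| ∈ U := by
      simp only [hU, Finset.mem_image, Finset.mem_filter]
      exact ⟨i, ⟨Finset.mem_univ i, hi⟩, rfl⟩
    have hUn : U.Nonempty := ⟨_, hmem⟩
    simp only [hδdef, dif_pos hUn]
    exact U.min'_le _ hmem
  set t : ℝ := min (δ / |S|) (1 / m) with ht
  have htpos : 0 < t := lt_min (div_pos hδpos hSpos) (div_pos one_pos hmpos)
  set ε : ℝ := S * t with hε
  have hεabs : |ε| ≤ δ := by
    have habs : |ε| = |S| * t := by rw [hε, abs_mul, abs_of_pos htpos]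
    rw [habs]
    calc |S| * t ≤ |S| * (δ / |S|) :=
          mul_le_mul_of_nonneg_left (min_le_left _ _) (le_of_lt hSpos)
      _ = δ := by field_simp
  set χ : Fin n → ℝ := fun i => if p i = c then 1 else 0 with hχ
  set q : Fin n → ℝ := fun i => p i + ε * χ i with hq
  have hεle : ε ≤ δ := le_trans (le_abs_self ε) hεabs
  have hεge : -δ ≤ ε := neg_le_of_abs_le hεabs
  have hqmono : Monotone q := by
    intro i j hij
    have hpij : p i ≤ p j := hp.1 hij
    simp only [hq, hχ]
    by_cases hi : p i = c <;> by_cases hj : p j = c <;>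
      simp only [hi, hj, if_true, if_false, mul_one, mul_zero, add_zero, if_pos, if_neg,
        not_false_iff]
    · linarith
    · have hlt : c < p j := lt_of_le_of_ne (hi ▸ hpij) (Ne.symm hj)
      have h2 : δ ≤ p j - c := by
        have := hδle j hj
        rwa [abs_of_pos (sub_pos.mpr hlt)] at this
      linarith [hi.le, hi.ge]
    · have hlt : p i < c := lt_of_le_of_ne (hj ▸ hpij) hi
      have h2 : δ ≤ c - p i := by
        have := hδle i hi
        rwa [abs_of_neg (sub_neg.mpr hlt), neg_sub] at this
      linarith [hj.le, hj.ge]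
    · exact hpij
  have hopt := hp.2 q hqmono
  have h1 : ∑ i, (d i - p i) * χ i = S := by
    rw [hS, hT, Finset.sum_filter]
    apply Finset.sum_congr rfl
    intro i _
    by_cases hi : p i = c <;> simp [hχ, hi]
  have h2 : ∑ i, χ i = (m : ℝ) := by
    simp only [hχ, Finset.sum_boole, hm, hT]
  have hsum : ∑ i, (d i - q i) ^ 2
      = (∑ i, (d i - p i) ^ 2) - 2 * ε * S + ε ^ 2 * m := by
    calc ∑ i, (d i - q i) ^ 2
        = ∑ i, ((d i - p i) ^ 2 - 2 * ε * ((d i - p i) * χ i) + ε ^ 2 * χ i) := by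
          apply Finset.sum_congr rfl
          intro i _
          simp only [hq, hχ]
          by_cases hi : p i = c <;> simp [hi] <;> ring
      _ = (∑ i, (d i - p i) ^ 2) - 2 * ε * (∑ i, (d i - p i) * χ i)
            + ε ^ 2 * (∑ i, χ i) := by
          rw [Finset.sum_add_distrib, Finset.sum_sub_distrib, Finset.mul_sum, Finset.mul_sum]
      _ = _ := by rw [h1, h2]
  rw [hsum] at hopt
  have hineq : 0 ≤ -2 * ε * S + ε ^ 2 * m := by linarith
  have hS2 : 0 < S ^ 2 := by positivity
  have htm : t * m ≤ 1 := by
    have h3 : t ≤ 1 / m := min_le_right _ _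
    rw [le_div_iff₀ hmpos] at h3
    linarith
  nlinarith [mul_pos hS2 htpos]

/-- The isotonic fit exactly balances the residuals against any function of the
fitted values: `∑ (dᵢ - p̂ᵢ) h(p̂ᵢ) = 0` for every `h : ℝ → ℝ`. -/
theorem isotonic_fit_residual_balance {n : ℕ} (d p : Fin n → ℝ) (hp : IsIsoFit d p)
    (h : ℝ → ℝ) :
    ∑ i, (d i - p i) * h (p i) = 0 := by
  classical
  rw [← Finset.sum_fiberwise_of_maps_to
      (fun i _ => Finset.mem_image_of_mem p (Finset.mem_univ i))
      (fun i => (d i - p i) * h (p i))]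
  refine Finset.sum_eq_zero fun c _ => ?_
  have hc : ∑ i ∈ univ.filter (fun i => p i = c), (d i - p i) * h (p i)
      = h c * ∑ i ∈ univ.filter (fun i => p i = c), (d i - p i) := by
    rw [Finset.mul_sum]
    refine Finset.sum_congr rfl fun i hi => ?_
    rw [Finset.mem_filter] at hi
    rw [hi.2]; ring
  rw [hc, level_sum d p hp c, mul_zero]
end

section
/- Suppose d_1,…,d_n ∈ {0,1} and let p̂ be the isotonic least-squares fit of d. Then 0 ≤ p̂_i ≤ 1 for all i, and p̂ maximizes the binomial likelihood under the monotonicity constraint: for every vector q with 0 ≤ q_1 ≤ q_2 ≤ … ≤ q_n ≤ 1, ∏_{i=1}^n q_i^{d_i}(1 − q_i)^{1−d_i} ≤ ∏_{i=1}^n p̂_i^{d_i}(1 − p̂_i)^{1−d_i} (with the convention 0^0 = 1). Hence maximizing the constrained binomial likelihood is equivalent to minimizing ∑_{i=1}^n (d_i − p_i)² under the same monotonicity constraint. -/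
open Finset

namespace IsoAux
variable {n : ℕ}

lemma sum_sq_expand (a b : Fin n → ℝ) (t : ℝ) :
    ∑ i, (a i - t * b i)^2
      = ∑ i, (a i)^2 - 2*t*(∑ i, a i * b i) + t^2 * ∑ i, (b i)^2 := by
  rw [Finset.mul_sum, Finset.mul_sum, ← Finset.sum_sub_distrib, ← Finset.sum_add_distrib]
  exact Finset.sum_congr rfl fun i _ => by ring

lemma quad_nonpos {S N t₀ : ℝ} (hN : 0 ≤ N) (ht₀ : 0 < t₀)
    (h : ∀ t : ℝ, 0 < t → t ≤ t₀ → 0 ≤ -(2*t*S) + t^2*N) : S ≤ 0 := by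
  by_contra hS
  push_neg at hS
  set t := min t₀ (S/(N+1)) with ht
  have h1 : 0 < t := lt_min ht₀ (div_pos hS (by linarith))
  have h2 := h t h1 (min_le_left _ _)
  have h3 : t ≤ S/(N+1) := min_le_right _ _
  have h4 : t * (N+1) ≤ S := (le_div_iff₀ (by linarith)).mp h3
  nlinarith [mul_le_mul_of_nonneg_left h4 h1.le, mul_pos h1 hS, mul_pos h1 h1]

lemma quad_zero {S N t₀ : ℝ} (hN : 0 ≤ N) (ht₀ : 0 < t₀)
    (h : ∀ t : ℝ, |t| ≤ t₀ → 0 ≤ -(2*t*S) + t^2*N) : S = 0 := by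
  have h1 : S ≤ 0 := by
    apply quad_nonpos hN ht₀
    intro t ht1 ht2
    exact h t (by rw [abs_of_pos ht1]; exact ht2)
  have h2 : -S ≤ 0 := by
    apply quad_nonpos hN ht₀
    intro t ht1 ht2
    have := h (-t) (by rw [abs_neg, abs_of_pos ht1]; exact ht2)
    nlinarith [this]
  linarith

lemma resid_le (d p : Fin n → ℝ) (hp : IsIsoFit d p) (m : Fin n → ℝ) (hm : Monotone m) :
    ∑ i, (d i - p i) * m i ≤ 0 := by
  have hNn : 0 ≤ ∑ i, (m i)^2 := Finset.sum_nonneg fun i _ => sq_nonneg _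
  apply quad_nonpos hNn one_pos (t₀ := 1)
  intro t ht _
  have hmono : Monotone (fun i => p i + t * m i) := fun i j hij => by
    have h1 := hp.1 hij; have h2 := hm hij
    simp only
    nlinarith
  have h2 := hp.2 _ hmono
  have he : ∑ i, (d i - (p i + t * m i))^2 = ∑ i, ((d i - p i) - t * m i)^2 :=
    Finset.sum_congr rfl fun i _ => by ring
  rw [he, sum_sq_expand] at h2
  linarith

lemma block_sum (d p : Fin n → ℝ) (hp : IsIsoFit d p) (c : ℝ) :
    ∑ j ∈ univ.filter (fun j => p j = c), (d j - c) = 0 := by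
  classical
  set χ : Fin n → ℝ := fun j => if p j = c then 1 else 0 with hχ
  set s := (univ.filter (fun j => p j ≠ c)).image (fun j => |p j - c|) with hs
  set t₀ := if h : s.Nonempty then s.min' h else 1 with ht₀
  have hspos : ∀ x ∈ s, 0 < x := by
    intro x hx
    obtain ⟨j, hj, rfl⟩ := Finset.mem_image.mp hx
    exact abs_pos.mpr (sub_ne_zero.mpr (Finset.mem_filter.mp hj).2)
  have ht₀pos : 0 < t₀ := by
    rw [ht₀]; split_ifs with h
    · exact hspos _ (s.min'_mem h)
    · exact one_pos
  have ht₀le : ∀ j, p j ≠ c → t₀ ≤ |p j - c| := by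
    intro j hj
    have hmem : |p j - c| ∈ s :=
      Finset.mem_image.mpr ⟨j, Finset.mem_filter.mpr ⟨Finset.mem_univ j, hj⟩, rfl⟩
    rw [ht₀, dif_pos ⟨_, hmem⟩]
    exact Finset.min'_le _ _ hmem
  have hmono : ∀ t : ℝ, |t| ≤ t₀ → Monotone (fun j => p j + t * χ j) := by
    intro t ht i j hij
    have hpij := hp.1 hij
    have habs := abs_le.mp ht
    show p i + t * χ i ≤ p j + t * χ j
    simp only [hχ]
    split_ifs with hi hj2 hj2
    · linarith
    · have h5 : c ≤ p j := hi ▸ hpij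
      have h6 := ht₀le j hj2
      rw [abs_of_nonneg (by linarith)] at h6
      have h7 : p i = c := hi
      linarith
    · have h5 : p i ≤ c := hj2 ▸ hpij
      have h6 := ht₀le i hi
      rw [abs_of_nonpos (by linarith)] at h6
      linarith
    · linarith
  have hSχ : ∑ i, (d i - p i) * χ i = ∑ j ∈ univ.filter (fun j => p j = c), (d j - c) := by
    rw [Finset.sum_filter]
    apply Finset.sum_congr rfl
    intro i _
    by_cases hi : p i = c <;> simp [hχ, hi]
  have hNχ : 0 ≤ ∑ i, (χ i)^2 := Finset.sum_nonneg fun i _ => sq_nonneg _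
  apply quad_zero hNχ ht₀pos (N := ∑ i, (χ i)^2)
  intro t ht
  have h2 := hp.2 _ (hmono t ht)
  have he : ∑ i, (d i - (p i + t * χ i))^2 = ∑ i, ((d i - p i) - t * χ i)^2 :=
    Finset.sum_congr rfl fun i _ => by ring
  rw [he, sum_sq_expand, hSχ] at h2
  linarith

lemma resid_fun (d p : Fin n → ℝ) (hp : IsIsoFit d p) (g : ℝ → ℝ) :
    ∑ i, (d i - p i) * g (p i) = 0 := by
  classical
  rw [← Finset.sum_fiberwise_of_maps_to (g := p) (t := univ.image p)
      (fun x _ => Finset.mem_image_of_mem p (Finset.mem_univ x))]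
  apply Finset.sum_eq_zero
  intro c _
  have h : ∑ j ∈ univ.filter (fun j => p j = c), (d j - p j) * g (p j)
      = (∑ j ∈ univ.filter (fun j => p j = c), (d j - c)) * g c := by
    rw [Finset.sum_mul]
    apply Finset.sum_congr rfl
    intro j hj
    rw [(Finset.mem_filter.mp hj).2]
  rw [h, block_sum d p hp c, zero_mul]


lemma bounds (d p : Fin n → ℝ) (hd : ∀ i, d i = 0 ∨ d i = 1) (hp : IsIsoFit d p) :
    ∀ i, 0 ≤ p i ∧ p i ≤ 1 := by
  classical
  set q : Fin n → ℝ := fun i => max 0 (min 1 (p i)) with hq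
  have hqm : Monotone q := fun i j h =>
    max_le_max (le_refl 0) (min_le_min (le_refl 1) (hp.1 h))
  have hle : ∀ i, (d i - q i)^2 ≤ (d i - p i)^2 := by
    intro i
    rcases le_total (p i) 0 with h0 | h0
    · have hqi : q i = 0 := by
        rw [hq]; simp only
        rw [min_eq_right (by linarith : p i ≤ 1), max_eq_left h0]
      rw [hqi]
      rcases hd i with h | h <;> rw [h] <;> nlinarith
    · rcases le_total 1 (p i) with h1 | h1
      · have hqi : q i = 1 := by
          rw [hq]; simp only
          rw [min_eq_left h1]
          exact max_eq_right (by norm_num)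
        rw [hqi]
        rcases hd i with h | h <;> rw [h] <;> nlinarith
      · have hqi : q i = p i := by
          rw [hq]; simp only
          rw [min_eq_right h1, max_eq_right h0]
        rw [hqi]
  intro i
  by_contra hcon
  have hstrict : (d i - q i)^2 < (d i - p i)^2 := by
    rcases lt_or_ge (p i) 0 with h0 | h0
    · have hqi : q i = 0 := by
        rw [hq]; simp only
        rw [min_eq_right (by linarith : p i ≤ 1), max_eq_left h0.le]
      rw [hqi]
      rcases hd i with h | h <;> rw [h] <;> nlinarith
    · have h1 : 1 < p i := by
        rcases le_or_gt (p i) 1 with h1 | h1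
        · exact absurd ⟨h0, h1⟩ hcon
        · exact h1
      have hqi : q i = 1 := by
        rw [hq]; simp only
        rw [min_eq_left h1.le]
        exact max_eq_right (by norm_num)
      rw [hqi]
      rcases hd i with h | h <;> rw [h] <;> nlinarith
  have hsum : ∑ j, (d j - q j)^2 < ∑ j, (d j - p j)^2 :=
    Finset.sum_lt_sum (fun j _ => hle j) ⟨i, Finset.mem_univ i, hstrict⟩
  exact absurd (hp.2 q hqm) (not_le.mpr hsum)

lemma pos_of_one (d p : Fin n → ℝ) (hd : ∀ i, d i = 0 ∨ d i = 1) (hp : IsIsoFit d p)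
    (i : Fin n) (hi : d i = 1) : 0 < p i := by
  classical
  rcases (bounds d p hd hp i).1.lt_or_eq with h | h
  · exact h
  · exfalso
    have hb := block_sum d p hp (p i)
    have hmem : i ∈ univ.filter (fun j => p j = p i) :=
      Finset.mem_filter.mpr ⟨Finset.mem_univ i, rfl⟩
    have hnn : ∀ j ∈ univ.filter (fun j => p j = p i), 0 ≤ d j - p i := by
      intro j _
      rcases hd j with h2 | h2 <;> rw [h2] <;> linarith
    have := Finset.single_le_sum hnn hmem
    rw [hb, hi] at this
    linarith

lemma lt_one_of_zero (d p : Fin n → ℝ) (hd : ∀ i, d i = 0 ∨ d i = 1) (hp : IsIsoFit d p)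
    (i : Fin n) (hi : d i = 0) : p i < 1 := by
  classical
  rcases (bounds d p hd hp i).2.lt_or_eq with h | h
  · exact h
  · exfalso
    have hb := block_sum d p hp (p i)
    have hmem : i ∈ univ.filter (fun j => p j = p i) :=
      Finset.mem_filter.mpr ⟨Finset.mem_univ i, rfl⟩
    have hnp : ∀ j ∈ univ.filter (fun j => p j = p i), d j - p i ≤ 0 := by
      intro j _
      rcases hd j with h2 | h2 <;> rw [h2] <;> linarith
    have := Finset.sum_le_sum hnp
    rw [hb, Finset.sum_const, smul_zero] at this
    have h3 := Finset.single_le_sum (f := fun j => -(d j - p i))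
      (fun j hj => neg_nonneg.mpr (hnp j hj)) hmem
    have h4 : ∑ j ∈ univ.filter (fun j => p j = p i), -(d j - p i) = 0 := by
      rw [Finset.sum_neg_distrib, hb, neg_zero]
    rw [h4] at h3
    simp only [hi, h] at h3
    norm_num at h3


noncomputable def phi (x : ℝ) : ℝ := Real.log x - Real.log (1 - x)

lemma kl_nonneg {a q : ℝ} (ha : 0 < a) (ha1 : a < 1) (hq : 0 < q) (hq1 : q < 1) :
    0 ≤ a * (Real.log a - Real.log q) + (1 - a) * (Real.log (1 - a) - Real.log (1 - q)) := by
  have h1 : Real.log q - Real.log a ≤ q / a - 1 := by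
    have := Real.log_le_sub_one_of_pos (div_pos hq ha)
    rwa [Real.log_div hq.ne' ha.ne'] at this
  have hne : (1:ℝ) - a ≠ 0 := by linarith
  have h2 : Real.log (1 - q) - Real.log (1 - a) ≤ (1 - q) / (1 - a) - 1 := by
    have := Real.log_le_sub_one_of_pos
      (div_pos (show (0:ℝ) < 1 - q by linarith) (show (0:ℝ) < 1 - a by linarith))
    rwa [Real.log_div (by linarith : (1:ℝ) - q ≠ 0) hne] at this
  have e1 : a * (q / a) = q := by field_simp
  have e2 : (1 - a) * ((1 - q) / (1 - a)) = 1 - q := by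
    rw [mul_comm, div_mul_cancel₀ _ hne]
  nlinarith [mul_le_mul_of_nonneg_left h1 ha.le,
    mul_le_mul_of_nonneg_left h2 (by linarith : (0:ℝ) ≤ 1 - a)]

lemma pointwise (a q e : ℝ) (he : e = 0 ∨ e = 1) (ha0 : 0 ≤ a) (ha1 : a ≤ 1)
    (hpos : e = 1 → 0 < a) (hlt : e = 0 → a < 1) (hq : 0 < q) (hq1 : q < 1) :
    Real.log (if e = 1 then q else 1 - q) - Real.log (if e = 1 then a else 1 - a)
      ≤ (e - a) * (phi q - phi a) := by
  rcases he with he | he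
  · have hne : e ≠ 1 := by rw [he]; norm_num
    rw [if_neg hne, if_neg hne, he]
    have halt := hlt he
    rcases ha0.lt_or_eq with h | h
    · have hkl := kl_nonneg h halt hq hq1
      simp only [phi]
      nlinarith [hkl]
    · rw [← h]
      simp only [phi, ← h, sub_zero, Real.log_zero, Real.log_one, zero_sub, sub_zero]
      have : Real.log (1 - q) ≤ 0 := Real.log_nonpos (by linarith) (by linarith)
      simp only [neg_zero, zero_mul, sub_self]
      ring_nf
      linarith [this]
  · rw [if_pos he, if_pos he, he]
    have hagt := hpos he
    rcases ha1.lt_or_eq with h | h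
    · have hkl := kl_nonneg hagt h hq hq1
      simp only [phi]
      nlinarith [hkl]
    · rw [h]
      simp only [phi, h, sub_self, Real.log_zero, Real.log_one, sub_zero, zero_sub]
      have : Real.log q ≤ 0 := Real.log_nonpos hq.le hq1.le
      simp only [sub_self, zero_mul]
      ring_nf
      linarith [this]

lemma interior (d p : Fin n → ℝ) (hd : ∀ i, d i = 0 ∨ d i = 1) (hp : IsIsoFit d p)
    (q : Fin n → ℝ) (hq : Monotone q) (hq01 : ∀ i, 0 < q i ∧ q i < 1) :
    ∏ i, (if d i = 1 then q i else 1 - q i) ≤ ∏ i, (if d i = 1 then p i else 1 - p i) := by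
  classical
  have hfp : ∀ i, 0 < (if d i = 1 then p i else 1 - p i) := by
    intro i
    rcases hd i with h | h
    · rw [if_neg (by rw [h]; norm_num)]
      linarith [lt_one_of_zero d p hd hp i h]
    · rw [if_pos h]
      exact pos_of_one d p hd hp i h
  have hfq : ∀ i, 0 < (if d i = 1 then q i else 1 - q i) := by
    intro i
    split_ifs
    · exact (hq01 i).1
    · linarith [(hq01 i).2]
  rw [← Real.log_le_log_iff (Finset.prod_pos fun i _ => hfq i) (Finset.prod_pos fun i _ => hfp i),
    Real.log_prod (fun i _ => (hfq i).ne'), Real.log_prod (fun i _ => (hfp i).ne')]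
  have hpw : ∀ i, Real.log (if d i = 1 then q i else 1 - q i)
      - Real.log (if d i = 1 then p i else 1 - p i)
      ≤ (d i - p i) * (phi (q i) - phi (p i)) := fun i =>
    pointwise (p i) (q i) (d i) (hd i) (bounds d p hd hp i).1 (bounds d p hd hp i).2
      (pos_of_one d p hd hp i) (lt_one_of_zero d p hd hp i) (hq01 i).1 (hq01 i).2
  have hsum : ∑ i, (Real.log (if d i = 1 then q i else 1 - q i)
      - Real.log (if d i = 1 then p i else 1 - p i))
      ≤ ∑ i, (d i - p i) * (phi (q i) - phi (p i)) :=
    Finset.sum_le_sum fun i _ => hpw i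
  have hsplit : ∑ i, (d i - p i) * (phi (q i) - phi (p i))
      = ∑ i, (d i - p i) * phi (q i) - ∑ i, (d i - p i) * phi (p i) := by
    rw [← Finset.sum_sub_distrib]
    exact Finset.sum_congr rfl fun i _ => by ring
  have hzero : ∑ i, (d i - p i) * phi (p i) = 0 := resid_fun d p hp phi
  have hm : Monotone (fun i => phi (q i)) := by
    intro i j hij
    have h1 := (hq01 i).1; have h2 := (hq01 i).2
    have h3 := (hq01 j).1; have h4 := (hq01 j).2
    have h5 := hq hij
    simp only [phi]
    have l1 : Real.log (q i) ≤ Real.log (q j) := Real.log_le_log h1 h5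
    have l2 : Real.log (1 - q j) ≤ Real.log (1 - q i) :=
      Real.log_le_log (by linarith) (by linarith)
    linarith
  have hneg : ∑ i, (d i - p i) * phi (q i) ≤ 0 := resid_le d p hp _ hm
  rw [Finset.sum_sub_distrib] at hsum
  linarith [hsum, hsplit ▸ hsum]
end IsoAux

open IsoAux

/-- For binary data `d ∈ {0,1}ⁿ`, the isotonic least-squares fit `p̂` takes values in
`[0,1]` and maximizes the binomial likelihood `∏ qᵢ^{dᵢ} (1-qᵢ)^{1-dᵢ}` over all
nondecreasing `q` with values in `[0,1]` (real powers, with the rpow convention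
`0 ^ 0 = 1`).  Hence maximizing the constrained binomial likelihood is equivalent to
constrained least squares. -/
theorem isotonic_fit_maximizes_binomial_likelihood {n : ℕ} (d p : Fin n → ℝ)
    (hd : ∀ i, d i = 0 ∨ d i = 1) (hp : IsIsoFit d p) :
    (∀ i, 0 ≤ p i ∧ p i ≤ 1) ∧
    ∀ q : Fin n → ℝ, Monotone q → (∀ i, 0 ≤ q i ∧ q i ≤ 1) →
      ∏ i, q i ^ d i * (1 - q i) ^ (1 - d i) ≤
        ∏ i, p i ^ d i * (1 - p i) ^ (1 - d i) := by
  classical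
  refine ⟨bounds d p hd hp, ?_⟩
  intro q hq hq01
  have hrw : ∀ r : Fin n → ℝ, ∏ i, r i ^ d i * (1 - r i) ^ (1 - d i)
      = ∏ i, (if d i = 1 then r i else 1 - r i) := by
    intro r
    apply Finset.prod_congr rfl
    intro i _
    rcases hd i with h | h
    · rw [if_neg (by rw [h]; norm_num), h]
      rw [Real.rpow_zero, sub_zero, Real.rpow_one, one_mul]
    · rw [if_pos h, h]
      rw [Real.rpow_one, sub_self, Real.rpow_zero, mul_one]
  rw [hrw q, hrw p]
  set G : ℝ → ℝ := fun ε => ∏ i, (if d i = 1 then (1 - ε) * q i + ε / 2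
      else 1 - ((1 - ε) * q i + ε / 2)) with hG
  have hG0 : G 0 = ∏ i, (if d i = 1 then q i else 1 - q i) := by
    rw [hG]
    simp
  have hcont : Continuous G := by
    rw [hG]
    apply continuous_finset_prod
    intro i _
    by_cases h : d i = 1
    · simp only [if_pos h]
      fun_prop
    · simp only [if_neg h]
      fun_prop
  have htend : Filter.Tendsto G (nhdsWithin 0 (Set.Ioi 0)) (nhds (∏ i, (if d i = 1 then q i else 1 - q i))) := by
    rw [← hG0]
    exact (hcont.tendsto 0).mono_left nhdsWithin_le_nhds
  have hev : ∀ᶠ ε in nhdsWithin (0:ℝ) (Set.Ioi 0),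
      G ε ≤ ∏ i, (if d i = 1 then p i else 1 - p i) := by
    have hIoo : Set.Ioo (0:ℝ) 1 ∈ nhdsWithin (0:ℝ) (Set.Ioi 0) :=
      Ioo_mem_nhdsGT_of_mem (by norm_num : (0:ℝ) ∈ Set.Ico (0:ℝ) 1)
    filter_upwards [hIoo] with ε hε
    obtain ⟨hε0, hε1⟩ := hε
    apply interior d p hd hp (fun i => (1 - ε) * q i + ε / 2)
    · intro i j hij
      have := hq hij
      have h1 : (0:ℝ) < 1 - ε := by linarith
      simp only
      nlinarith
    · intro i
      obtain ⟨h0, h1⟩ := hq01 i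
      constructor
      · nlinarith
      · nlinarith
  exact le_of_tendsto htend hev
end

section
/- (Lemma 1.) Let D_1,…,D_n ∈ {0,1} and Y_1,…,Y_n ∈ ℝ, and let π̂ = (π̂_1,…,π̂_n) be a vector such that on every level set S_c = {j : π̂_j = c}, the value c equals the proportion of treated units in S_c, i.e., c = (∑_{j ∈ S_c} D_j)/|S_c|. Suppose n_1 = ∑_{i=1}^n D_i > 0 and π̂_i < 1 for every i with D_i = 1. Then the propensity-score matching estimator equals the inverse-probability-weighting estimator: (1/n_1) ∑_{i=1}^n D_i { Y_i − (∑_{j=1}^n (1−D_j) Y_j 1{π̂_j = π̂_i}) / (∑_{j=1}^n (1−D_j) 1{π̂_j = π̂_i}) } = (1/n_1) ∑_{j=1}^n { D_j Y_j − (1−D_j) Y_j π̂_j/(1−π̂_j) }. -/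
open Finset
open scoped Classical

/-- Lemma 1: if on every level set of `π̂` the common value equals the treated
fraction of the level set, `n₁ = ∑ Dᵢ > 0`, and `π̂ᵢ < 1` for every treated unit,
then the propensity-score matching estimator equals the inverse-probability-weighting
estimator. -/
theorem psm_eq_ipw {n : ℕ} (D Y πh : Fin n → ℝ)
    (hD : ∀ i, D i = 0 ∨ D i = 1)
    (hlevel : ∀ c : ℝ, (Finset.univ.filter (fun j : Fin n => πh j = c)).Nonempty →
      c = (∑ j ∈ Finset.univ.filter (fun j : Fin n => πh j = c), D j)
        / ((Finset.univ.filter (fun j : Fin n => πh j = c)).card : ℝ))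
    (hn1 : 0 < ∑ i, D i)
    (hlt : ∀ i, D i = 1 → πh i < 1) :
    (1 / ∑ i, D i) * ∑ i, D i * (Y i -
        (∑ j ∈ Finset.univ.filter (fun j : Fin n => πh j = πh i), (1 - D j) * Y j)
          / (∑ j ∈ Finset.univ.filter (fun j : Fin n => πh j = πh i), (1 - D j))) =
    (1 / ∑ i, D i) * ∑ j, (D j * Y j - (1 - D j) * Y j * πh j / (1 - πh j)) := by
  congr 1
  have H : ∀ (F : Fin n → ℝ), ∑ i, F i =
      ∑ c ∈ Finset.univ.image πh,
        ∑ i ∈ Finset.univ.filter (fun j : Fin n => πh j = c), F i :=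
    fun F => (Finset.sum_fiberwise_of_maps_to
      (fun x _ => Finset.mem_image_of_mem πh (Finset.mem_univ x)) F).symm
  rw [H, H]
  refine Finset.sum_congr rfl fun c hc => ?_
  set S := Finset.univ.filter (fun j : Fin n => πh j = c) with hS
  have hSne : S.Nonempty := by
    obtain ⟨x, -, hx⟩ := Finset.mem_image.mp hc
    exact ⟨x, by simp [hS, hx]⟩
  set A := ∑ j ∈ S, (1 - D j) * Y j with hA
  set B := ∑ j ∈ S, (1 - D j) with hB
  set nD := ∑ j ∈ S, D j with hnD
  have hm : (S.card : ℝ) ≠ 0 :=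
    Nat.cast_ne_zero.mpr (Finset.card_pos.mpr hSne).ne'
  have hc' : c = nD / S.card := hlevel c hSne
  have hnDc : nD = c * S.card := by
    rw [hc']; field_simp
  have hBc : B = (1 - c) * S.card := by
    have : B = (S.card : ℝ) - nD := by
      simp [hB, hnD, Finset.sum_sub_distrib]
    rw [this, hnDc]; ring
  have hL : ∑ i ∈ S, D i * (Y i -
      (∑ j ∈ Finset.univ.filter (fun j : Fin n => πh j = πh i), (1 - D j) * Y j)
        / (∑ j ∈ Finset.univ.filter (fun j : Fin n => πh j = πh i), (1 - D j)))
      = ∑ i ∈ S, D i * (Y i - A / B) := by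
    refine Finset.sum_congr rfl fun i hi => ?_
    have hπ : πh i = c := (Finset.mem_filter.mp hi).2
    rw [hπ]
  have hR : ∑ j ∈ S, (D j * Y j - (1 - D j) * Y j * πh j / (1 - πh j))
      = ∑ j ∈ S, (D j * Y j - ((1 - D j) * Y j) * (c / (1 - c))) := by
    refine Finset.sum_congr rfl fun j hj => ?_
    have hπ : πh j = c := (Finset.mem_filter.mp hj).2
    rw [hπ, mul_div_assoc]
  rw [hL, hR]
  have expand1 : ∑ i ∈ S, D i * (Y i - A / B)
      = ∑ i ∈ S, D i * Y i - nD * (A / B) := by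
    simp only [mul_sub, Finset.sum_sub_distrib, ← Finset.sum_mul, hnD]
  have expand2 : ∑ j ∈ S, (D j * Y j - ((1 - D j) * Y j) * (c / (1 - c)))
      = ∑ j ∈ S, D j * Y j - A * (c / (1 - c)) := by
    simp only [Finset.sum_sub_distrib, ← Finset.sum_mul, hA]
  rw [expand1, expand2]
  have key : nD * (A / B) = A * (c / (1 - c)) := by
    by_cases h1 : c = 1
    · have hB0 : B = 0 := by rw [hBc, h1]; ring
      rw [h1, hB0]
      simp
    · have hB0 : B ≠ 0 := by
        rw [hBc]
        exact mul_ne_zero (sub_ne_zero.mpr (Ne.symm h1)) hm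
      rw [hnDc, hBc]
      have h1c : (1 : ℝ) - c ≠ 0 := sub_ne_zero.mpr (Ne.symm h1)
      field_simp
  rw [key]
end

section
/- Let D_1,…,D_n ∈ {0,1} with n_1 = ∑_{i=1}^n D_i > 0, let π̂ be the isotonic least-squares fit of (D_1,…,D_n), and suppose π̂_i < 1 for all i. Then the proposed PSM estimator τ̂ = (1/n_1) ∑_{j=1}^n {D_j Y_j − (1−D_j) Y_j π̂_j/(1−π̂_j)} coincides with the Hirano–Imbens–Ridder estimator τ̃ = (1/∑_{j=1}^n π̂_j) ∑_{j=1}^n {D_j Y_j − (1−D_j) Y_j π̂_j/(1−π̂_j)}; in particular this follows because the isotonic fit satisfies ∑_{i=1}^n π̂_i = ∑_{i=1}^n D_i = n_1. -/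
open Finset

/-- The isotonic fit of binary treatment indicators satisfies `∑ π̂ᵢ = ∑ Dᵢ = n₁`;
in particular the proposed PSM (inverse weighting) estimator `τ̂` coincides with the
Hirano–Imbens–Ridder estimator `τ̃`. -/
theorem psm_eq_hir {n : ℕ} (D Y πh : Fin n → ℝ)
    (hD : ∀ i, D i = 0 ∨ D i = 1)
    (hn1 : 0 < ∑ i, D i)
    (hfit : IsIsoFit D πh)
    (hlt : ∀ i, πh i < 1) :
    (∑ i, πh i = ∑ i, D i) ∧
    (1 / ∑ i, D i) * ∑ j, (D j * Y j - (1 - D j) * Y j * πh j / (1 - πh j)) =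
      (1 / ∑ j, πh j) * ∑ j, (D j * Y j - (1 - D j) * Y j * πh j / (1 - πh j)) := by
  have hn : 0 < (n : ℝ) := by
    rcases Nat.eq_zero_or_pos n with h | h
    · subst h; simp at hn1
    · exact_mod_cast h
  set S : ℝ := ∑ i, (D i - πh i) with hS
  have key : ∀ c : ℝ, ∑ i, (D i - πh i) ^ 2 ≤ ∑ i, (D i - (πh i + c)) ^ 2 := by
    intro c
    exact hfit.2 (fun i => πh i + c)
      (fun a b hab => add_le_add (hfit.1 hab) (le_refl c))
  have hineq : ∀ c : ℝ, 0 ≤ (n : ℝ) * c ^ 2 - 2 * c * S := by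
    intro c
    have h := key c
    have hexp : ∑ i, (D i - (πh i + c)) ^ 2
        = ∑ i, (D i - πh i) ^ 2 - 2 * c * S + (n : ℝ) * c ^ 2 := by
      have h1 : ∀ i ∈ Finset.univ, (D i - (πh i + c)) ^ 2
          = (D i - πh i) ^ 2 - 2 * c * (D i - πh i) + c ^ 2 := fun i _ => by ring
      rw [Finset.sum_congr rfl h1, Finset.sum_add_distrib, Finset.sum_sub_distrib,
        ← Finset.mul_sum, ← hS, Finset.sum_const]
      simp [mul_comm]
    rw [hexp] at h
    linarith
  have hS0 : S = 0 := by
    have h := hineq (S / n)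
    have h2 : (n : ℝ) * (S / n) ^ 2 - 2 * (S / n) * S = -(S ^ 2) / n := by
      field_simp; ring
    rw [h2] at h
    have h3 : -(S ^ 2) / n * n = -(S ^ 2) := by field_simp
    have h4 : 0 ≤ -(S ^ 2) := by nlinarith [mul_nonneg h hn.le]
    nlinarith [sq_nonneg S]
  have hsum : ∑ i, πh i = ∑ i, D i := by
    have : ∑ i, (D i - πh i) = ∑ i, D i - ∑ i, πh i := Finset.sum_sub_distrib D πh
    rw [hS, this] at hS0
    linarith
  exact ⟨hsum, by rw [hsum]⟩
end

section
/- (Rosenbaum–Rubin.) Let (Ω, ℱ, P) be a probability space, let X be a random element, D a {0,1}-valued random variable, and W a random element (e.g., the pair of potential outcomes (Y(0), Y(1))). Let π(X) be a version of the conditional expectation E[D | σ(X)]. If D and W are conditionally independent given σ(X), then D and W are conditionally independent given σ(π(X)). -/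
open MeasureTheory

/-- `U` and `W` are conditionally independent given the sub-σ-algebra `m`:
for all bounded measurable real test functions `f, g`,
`E[f(U) g(W) | m] = E[f(U) | m] · E[g(W) | m]` almost surely. -/
def CondIndepOn {Ω E F : Type*} [MeasurableSpace Ω] [MeasurableSpace E] [MeasurableSpace F]
    (P : Measure Ω) (m : MeasurableSpace Ω) (U : Ω → E) (W : Ω → F) : Prop :=
  ∀ (f : E → ℝ) (g : F → ℝ), Measurable f → Measurable g →
    (∃ C, ∀ x, |f x| ≤ C) → (∃ C, ∀ x, |g x| ≤ C) →
    P[fun ω => f (U ω) * g (W ω)|m] =ᵐ[P]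
      fun ω => (P[fun ω' => f (U ω')|m]) ω * (P[fun ω' => g (W ω')|m]) ω

/-- clipping function, equal to the identity on `{0, 1}` and bounded by `1`. -/
def rrClip (x : ℝ) : ℝ := max 0 (min x 1)

lemma rrClip_meas : Measurable rrClip :=
  measurable_const.max (measurable_id.min measurable_const)

lemma rrClip_abs_le (x : ℝ) : |rrClip x| ≤ 1 := by
  rw [rrClip, abs_of_nonneg (le_max_left _ _)]
  exact max_le zero_le_one (min_le_right _ _)

lemma rrClip_zero : rrClip 0 = 0 := by norm_num [rrClip]
lemma rrClip_one : rrClip 1 = 1 := by norm_num [rrClip]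

theorem rosenbaum_rubin_aux {Ω E F : Type*} {mΩ : MeasurableSpace Ω} {mE : MeasurableSpace E}
    {mF : MeasurableSpace F}
    (P : Measure Ω) [IsProbabilityMeasure P]
    (X : Ω → E) (D : Ω → ℝ) (W : Ω → F)
    (hX : Measurable X) (hD : Measurable D) (hW : Measurable W)
    (hD01 : ∀ ω, D ω = 0 ∨ D ω = 1)
    (π : E → ℝ) (hπm : Measurable π)
    (hπ : (fun ω => π (X ω)) =ᵐ[P] P[D | MeasurableSpace.comap X inferInstance])
    (h : CondIndepOn P (MeasurableSpace.comap X inferInstance) D W) :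
    CondIndepOn P (MeasurableSpace.comap (fun ω => π (X ω)) inferInstance) D W := by
  intro f g hf hg hbf hbg
  obtain ⟨Cg0, hCg0⟩ := hbg
  have hCg : ∀ x, |g x| ≤ max Cg0 0 := fun x => le_trans (hCg0 x) (le_max_left _ _)
  set Cg := max Cg0 0 with hCg_def
  set m := MeasurableSpace.comap X (inferInstance : MeasurableSpace E) with hm_def
  set mπ := MeasurableSpace.comap (fun ω => π (X ω))
    (inferInstance : MeasurableSpace ℝ) with hmπ_def
  have hle : mπ ≤ m := by
    rw [hmπ_def, hm_def]
    have h' : (fun ω => π (X ω)) = π ∘ X := rfl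
    rw [h', ← MeasurableSpace.comap_comp]
    exact MeasurableSpace.comap_mono hπm.comap_le
  have hm0 : m ≤ mΩ := hX.comap_le
  have hmπ0 : mπ ≤ mΩ := (hπm.comp hX).comap_le
  have hπXm : Measurable[mπ] (fun ω => π (X ω)) := Measurable.of_comap_le le_rfl
  have hπXsm : StronglyMeasurable[mπ] (fun ω => π (X ω)) := hπXm.stronglyMeasurable
  -- bounds
  have hDbd : ∀ ω, |D ω| ≤ 1 := fun ω => by rcases hD01 ω with h'|h' <;> simp [h']
  have hπbd : ∀ᵐ ω ∂P, |π (X ω)| ≤ 1 := by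
    have hb : ∀ᵐ ω ∂P, |(P[D|m]) ω| ≤ ((1 : NNReal) : ℝ) :=
      ae_bdd_condExp_of_ae_bdd (Filter.Eventually.of_forall fun ω => by simpa using hDbd ω)
    filter_upwards [hπ, hb] with ω h1 h2
    rw [h1]; simpa using h2
  -- integrability
  have hbdd_int : ∀ (u : Ω → ℝ) (C : ℝ), AEStronglyMeasurable[mΩ] u P → (∀ ω, |u ω| ≤ C) →
      Integrable u P := fun u C hu hb =>
    (integrable_const C).mono' hu
      (Filter.Eventually.of_forall fun ω => by simpa [Real.norm_eq_abs] using hb ω)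
  have hgW_int : Integrable (fun ω => g (W ω)) P :=
    hbdd_int _ Cg ((hg.comp hW).aestronglyMeasurable) (fun ω => hCg _)
  have hDgW_int : Integrable (fun ω => D ω * g (W ω)) P := by
    refine hbdd_int _ Cg ((hD.mul (hg.comp hW)).aestronglyMeasurable) (fun ω => ?_)
    rw [abs_mul]
    calc |D ω| * |g (W ω)| ≤ 1 * Cg :=
      mul_le_mul (hDbd ω) (hCg _) (abs_nonneg _) zero_le_one
    _ = Cg := one_mul _
  have hπX_int : Integrable (fun ω => π (X ω)) P :=
    (integrable_const (1:ℝ)).mono' ((hπm.comp hX).aestronglyMeasurable)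
      (by filter_upwards [hπbd] with ω hω; simpa [Real.norm_eq_abs] using hω)
  -- Step A: apply conditional independence with clipped identity
  have hA := h rrClip g rrClip_meas hg ⟨1, rrClip_abs_le⟩ ⟨Cg0, hCg0⟩
  have hclipD1 : (fun ω => rrClip (D ω) * g (W ω)) = fun ω => D ω * g (W ω) := by
    funext ω; rcases hD01 ω with h'|h' <;> rw [h'] <;> simp [rrClip_zero, rrClip_one]
  have hclipD2 : (fun ω' => rrClip (D ω')) = fun ω' => D ω' := by
    funext ω; rcases hD01 ω with h'|h' <;> rw [h'] <;> simp [rrClip_zero, rrClip_one]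
  rw [hclipD1, hclipD2] at hA
  have hA' : P[fun ω => D ω * g (W ω)|m] =ᵐ[P]
      fun ω => π (X ω) * (P[fun ω' => g (W ω')|m]) ω := by
    filter_upwards [hA, hπ] with ω h1 h2
    rw [h1, ← h2]
  -- Towers
  have htow1 : P[P[fun ω => D ω * g (W ω)|m]|mπ] =ᵐ[P] P[fun ω => D ω * g (W ω)|mπ] :=
    condExp_condExp_of_le hle hm0
  have htow2 : P[P[fun ω' => g (W ω')|m]|mπ] =ᵐ[P] P[fun ω' => g (W ω')|mπ] :=
    condExp_condExp_of_le hle hm0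
  have htow3 : P[P[D|m]|mπ] =ᵐ[P] P[D|mπ] := condExp_condExp_of_le hle hm0
  -- Step D: E[D g(W) | mπ] = π(X) E[g(W)|mπ]
  have hpull : P[fun ω => π (X ω) * (P[fun ω' => g (W ω')|m]) ω|mπ] =ᵐ[P]
      fun ω => π (X ω) * (P[P[fun ω' => g (W ω')|m]|mπ]) ω := by
    exact condExp_stronglyMeasurable_mul_of_bound hmπ0 (μ := P)
      hπXsm (integrable_condExp (f := fun ω' => g (W ω'))) 1
      (by filter_upwards [hπbd] with ω hω; simpa [Real.norm_eq_abs] using hω)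
  have hDg : P[fun ω => D ω * g (W ω)|mπ] =ᵐ[P]
      fun ω => π (X ω) * (P[fun ω' => g (W ω')|mπ]) ω := by
    calc P[fun ω => D ω * g (W ω)|mπ]
        =ᵐ[P] P[P[fun ω => D ω * g (W ω)|m]|mπ] := htow1.symm
      _ =ᵐ[P] P[fun ω => π (X ω) * (P[fun ω' => g (W ω')|m]) ω|mπ] := condExp_congr_ae hA'
      _ =ᵐ[P] fun ω => π (X ω) * (P[P[fun ω' => g (W ω')|m]|mπ]) ω := hpull
      _ =ᵐ[P] fun ω => π (X ω) * (P[fun ω' => g (W ω')|mπ]) ω := by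
          filter_upwards [htow2] with ω hω; rw [hω]
  -- Step E: E[D|mπ] = π(X)
  have hDπ : P[D|mπ] =ᵐ[P] fun ω => π (X ω) := by
    calc P[D|mπ] =ᵐ[P] P[P[D|m]|mπ] := htow3.symm
      _ =ᵐ[P] P[fun ω => π (X ω)|mπ] := condExp_congr_ae hπ.symm
      _ = fun ω => π (X ω) := condExp_of_stronglyMeasurable hmπ0 hπXsm hπX_int
  -- decompose f(D) = f 0 + (f 1 - f 0) * D
  have hfD : ∀ ω, f (D ω) = f 0 + (f 1 - f 0) * D ω := fun ω => by
    rcases hD01 ω with h'|h' <;> rw [h'] <;> ring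
  have hsum1 : (fun ω => f (D ω) * g (W ω)) =
      (fun ω => f 0 * g (W ω)) + fun ω => (f 1 - f 0) * (D ω * g (W ω)) := by
    funext ω; simp only [Pi.add_apply]; rw [hfD ω]; ring
  have hsmul1 : P[fun ω => f 0 * g (W ω)|mπ] =ᵐ[P]
      fun ω => f 0 * (P[fun ω' => g (W ω')|mπ]) ω := by
    have h' := condExp_smul (m := mπ) (m₀ := mΩ) (μ := P) (f 0) (fun ω' => g (W ω'))
    refine (condExp_congr_ae (Filter.Eventually.of_forall fun ω => ?_)).trans
      (h'.trans (Filter.Eventually.of_forall fun ω => ?_)) <;>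
      simp [smul_eq_mul]
  have hsmul2 : P[fun ω => (f 1 - f 0) * (D ω * g (W ω))|mπ] =ᵐ[P]
      fun ω => (f 1 - f 0) * (P[fun ω' => D ω' * g (W ω')|mπ]) ω := by
    have h' := condExp_smul (m := mπ) (m₀ := mΩ) (μ := P) (f 1 - f 0)
      (fun ω' => D ω' * g (W ω'))
    refine (condExp_congr_ae (Filter.Eventually.of_forall fun ω => ?_)).trans
      (h'.trans (Filter.Eventually.of_forall fun ω => ?_)) <;>
      simp [smul_eq_mul]
  have key : P[fun ω => f (D ω) * g (W ω)|mπ] =ᵐ[P]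
      fun ω => f 0 * (P[fun ω' => g (W ω')|mπ]) ω
        + (f 1 - f 0) * (P[fun ω' => D ω' * g (W ω')|mπ]) ω := by
    calc P[fun ω => f (D ω) * g (W ω)|mπ]
        = P[(fun ω => f 0 * g (W ω)) + fun ω => (f 1 - f 0) * (D ω * g (W ω))|mπ] := by
          rw [← hsum1]
      _ =ᵐ[P] P[fun ω => f 0 * g (W ω)|mπ] + P[fun ω => (f 1 - f 0) * (D ω * g (W ω))|mπ] :=
          condExp_add (hgW_int.const_mul _) (hDgW_int.const_mul _) mπ
      _ =ᵐ[P] _ := by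
          filter_upwards [hsmul1, hsmul2] with ω h1 h2
          simp only [Pi.add_apply]; rw [h1, h2]
  have hsum2 : (fun ω => f (D ω)) = (fun _ => f 0) + fun ω => (f 1 - f 0) * D ω := by
    funext ω; simp only [Pi.add_apply]; rw [hfD ω]
  have hsmul3 : P[fun ω => (f 1 - f 0) * D ω|mπ] =ᵐ[P]
      fun ω => (f 1 - f 0) * (P[D|mπ]) ω := by
    have h' := condExp_smul (m := mπ) (m₀ := mΩ) (μ := P) (f 1 - f 0) D
    refine (condExp_congr_ae (Filter.Eventually.of_forall fun ω => ?_)).trans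
      (h'.trans (Filter.Eventually.of_forall fun ω => ?_)) <;>
      simp [smul_eq_mul]
  have hD_int : Integrable D P := hbdd_int _ 1 hD.aestronglyMeasurable hDbd
  have hfDπ : P[fun ω' => f (D ω')|mπ] =ᵐ[P] fun ω => f 0 + (f 1 - f 0) * π (X ω) := by
    calc P[fun ω' => f (D ω')|mπ]
        = P[(fun _ => f 0) + fun ω => (f 1 - f 0) * D ω|mπ] := by rw [← hsum2]
      _ =ᵐ[P] P[fun _ => f 0|mπ] + P[fun ω => (f 1 - f 0) * D ω|mπ] :=
          condExp_add (integrable_const _) (hD_int.const_mul _) mπ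
      _ =ᵐ[P] fun ω => f 0 + (f 1 - f 0) * π (X ω) := by
          have hc : P[fun _ : Ω => f 0|mπ] = fun _ => f 0 := condExp_const hmπ0 _
          filter_upwards [hsmul3, hDπ] with ω h1 h2
          simp only [Pi.add_apply]; rw [hc, h1, h2]
  filter_upwards [key, hDg, hfDπ] with ω h1 h2 h3
  rw [h1, h2, h3]; ring

/-- Rosenbaum–Rubin: if `π(X)` is a version of `E[D | σ(X)]` and `D ⟂ W | σ(X)`,
then `D ⟂ W | σ(π(X))`. -/
theorem rosenbaum_rubin {Ω E F : Type*} [MeasurableSpace Ω] [MeasurableSpace E]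
    [MeasurableSpace F]
    (P : Measure Ω) [IsProbabilityMeasure P]
    (X : Ω → E) (D : Ω → ℝ) (W : Ω → F)
    (hX : Measurable X) (hD : Measurable D) (hW : Measurable W)
    (hD01 : ∀ ω, D ω = 0 ∨ D ω = 1)
    (π : E → ℝ) (hπm : Measurable π)
    (hπ : (fun ω => π (X ω)) =ᵐ[P] P[D | MeasurableSpace.comap X inferInstance])
    (h : CondIndepOn P (MeasurableSpace.comap X inferInstance) D W) :
    CondIndepOn P (MeasurableSpace.comap (fun ω => π (X ω)) inferInstance) D W :=
  rosenbaum_rubin_aux P X D W hX hD hW hD01 π hπm hπ h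
end

section
/- Suppose unconfoundedness holds, π(X) is a version of E[D | σ(X)] with c_0 ≤ π(X) ≤ 1 − c_0 almost surely for some constant c_0 ∈ (0, 1/2], Y(0) and Y(1) are integrable, and η = P(D = 1) > 0. Then, with Y = D·Y(1) + (1−D)·Y(0), the average treatment effect on the treated satisfies E[ Y(1) − Y(0) | D = 1 ] = (1/η) · E[ D·Y − (1−D)·Y·π(X)/(1−π(X)) ]. -/
open MeasureTheory ProbabilityTheory Filter

/-- Truncation of a real number at level `n`. -/
def attTrunc (n : ℕ) (y : ℝ) : ℝ := max (-(n : ℝ)) (min (n : ℝ) y)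

lemma attTrunc_measurable (n : ℕ) : Measurable (attTrunc n) :=
  measurable_const.max (measurable_const.min measurable_id)

lemma attTrunc_abs_le_n (n : ℕ) (y : ℝ) : |attTrunc n y| ≤ n := by
  have hn : (0:ℝ) ≤ n := Nat.cast_nonneg n
  rw [attTrunc, abs_le]
  exact ⟨le_max_left _ _, max_le (by linarith) (min_le_left _ _)⟩

lemma attTrunc_abs_le (n : ℕ) (y : ℝ) : |attTrunc n y| ≤ |y| := by
  have hn : (0:ℝ) ≤ n := Nat.cast_nonneg n
  rw [attTrunc, abs_le]
  constructor
  · rcases le_total y (n:ℝ) with h | h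
    · rw [min_eq_right h]; exact le_max_of_le_right (neg_abs_le y)
    · exact le_max_of_le_left (by linarith [le_abs_self y])
  · exact max_le (by linarith [abs_nonneg y])
      (le_trans (min_le_right _ _) (le_abs_self y))

lemma attTrunc_tendsto (y : ℝ) :
    Tendsto (fun n : ℕ => attTrunc n y) atTop (nhds y) := by
  refine tendsto_const_nhds.congr' ?_
  filter_upwards [eventually_ge_atTop ⌈|y|⌉₊] with n hn
  have h1 : |y| ≤ (n:ℝ) := le_trans (Nat.le_ceil _) (by exact_mod_cast hn)
  rw [attTrunc, min_eq_right (le_trans (le_abs_self y) h1),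
    max_eq_right (by linarith [neg_abs_le y])]

/-- ATT identification by inverse probability weighting: under unconfoundedness,
with `c₀ ≤ π(X) ≤ 1 - c₀` a.s., `Y(0), Y(1)` integrable and `η = P(D = 1) > 0`,
`E[Y(1) - Y(0) | D = 1] = η⁻¹ E[D·Y - (1-D)·Y·π(X)/(1-π(X))]`,
where `Y = D·Y(1) + (1-D)·Y(0)`. -/
theorem att_ipw_identity {Ω E : Type*} [MeasurableSpace Ω] [MeasurableSpace E]
    (P : Measure Ω) [IsProbabilityMeasure P]
    (X : Ω → E) (D Y0 Y1 : Ω → ℝ)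
    (hX : Measurable X) (hD : Measurable D) (hY0 : Measurable Y0) (hY1 : Measurable Y1)
    (hD01 : ∀ ω, D ω = 0 ∨ D ω = 1)
    (hunconf : CondIndepOn P (MeasurableSpace.comap X inferInstance) D
      (fun ω => (Y0 ω, Y1 ω)))
    (π : E → ℝ) (hπm : Measurable π)
    (hπ : (fun ω => π (X ω)) =ᵐ[P] P[D | MeasurableSpace.comap X inferInstance])
    (c0 : ℝ) (hc0 : 0 < c0) (hc0' : c0 ≤ 1 / 2)
    (hπc : ∀ᵐ ω ∂P, c0 ≤ π (X ω) ∧ π (X ω) ≤ 1 - c0)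
    (hY0int : Integrable Y0 P) (hY1int : Integrable Y1 P)
    (hη : 0 < (P {ω | D ω = 1}).toReal) :
    ∫ ω, (Y1 ω - Y0 ω) ∂(ProbabilityTheory.cond P {ω | D ω = 1}) =
      (1 / (P {ω | D ω = 1}).toReal) *
        ∫ ω, (D ω * (D ω * Y1 ω + (1 - D ω) * Y0 ω)
          - (1 - D ω) * (D ω * Y1 ω + (1 - D ω) * Y0 ω) * π (X ω) / (1 - π (X ω))) ∂P := by
  classical
  have hm : MeasurableSpace.comap X inferInstance ≤ _ := hX.comap_le
  haveI : SigmaFinite (P.trim hm) := inferInstance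
  set ψ : Ω → ℝ := fun ω => π (X ω) / (1 - π (X ω)) with hψ_def
  set Cψ : ℝ := (1 - c0) / c0 with hCψ_def
  have hCψ0 : 0 ≤ Cψ := by
    apply div_nonneg <;> linarith
  have hψb : ∀ᵐ ω ∂P, 0 ≤ ψ ω ∧ ψ ω ≤ Cψ := by
    filter_upwards [hπc] with ω ⟨h1, h2⟩
    have hden : c0 ≤ 1 - π (X ω) := by linarith
    constructor
    · exact div_nonneg (by linarith) (by linarith)
    · exact div_le_div₀ (by linarith) (by linarith) hc0 hden
  have hXm : Measurable[MeasurableSpace.comap X inferInstance] X :=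
    Measurable.of_comap_le le_rfl
  have hψm : Measurable ψ := (hπm.comp hX).div (measurable_const.sub (hπm.comp hX))
  have hDb : ∀ ω, |D ω| ≤ 1 := by
    intro ω; rcases hD01 ω with h | h <;> simp [h]
  have hDint : Integrable D P := by
    refine Integrable.mono' (integrable_const 1) hD.aestronglyMeasurable ?_
    exact Eventually.of_forall fun ω => by simpa [Real.norm_eq_abs] using hDb ω
  set f1 : ℝ → ℝ := fun x => min (max x 0) 1 with hf1_def
  have hf1m : Measurable f1 := (measurable_id.max measurable_const).min measurable_const
  have hf1b : ∀ x, |f1 x| ≤ 1 := by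
    intro x
    rw [abs_le]
    exact ⟨le_min (le_max_of_le_right (by norm_num)) (by norm_num), min_le_right _ _⟩
  have hf1D : (fun ω => f1 (D ω)) = D := by
    funext ω; rcases hD01 ω with h | h <;> simp [h, f1]
  set f2 : ℝ → ℝ := fun x => 1 - f1 x with hf2_def
  have hf2m : Measurable f2 := measurable_const.sub hf1m
  have hf2b : ∀ x, |f2 x| ≤ 2 := by
    intro x
    have h := hf1b x
    rw [abs_le] at h ⊢
    simp only [f2]
    constructor <;> linarith [h.1, h.2]
  have hf2D : (fun ω => f2 (D ω)) = fun ω => 1 - D ω := by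
    funext ω; rcases hD01 ω with h | h <;> simp [h, f2, f1]
  have h1Dcond : P[(fun ω => 1 - D ω)|MeasurableSpace.comap X inferInstance] =ᵐ[P]
      fun ω => 1 - π (X ω) := by
    have h1 : P[(fun ω => 1 - D ω)|MeasurableSpace.comap X inferInstance] =ᵐ[P]
        P[(fun _ : Ω => (1:ℝ))|MeasurableSpace.comap X inferInstance]
          - P[D|MeasurableSpace.comap X inferInstance] :=
      condExp_sub (integrable_const 1) hDint _
    have h2 : P[(fun _ : Ω => (1:ℝ))|MeasurableSpace.comap X inferInstance] = fun _ => 1 :=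
      condExp_const hm 1
    filter_upwards [h1, hπ] with ω hω hπω
    simp only [Pi.sub_apply] at hω
    rw [hω, h2, ← hπω]
  -- Key identity for bounded measurable h
  have key : ∀ h : ℝ → ℝ, Measurable h → (∃ C, ∀ y, |h y| ≤ C) →
      ∫ ω, D ω * h (Y0 ω) ∂P = ∫ ω, (1 - D ω) * h (Y0 ω) * ψ ω ∂P := by
    intro h hhm ⟨C, hC⟩
    have hC0 : 0 ≤ C := le_trans (abs_nonneg _) (hC 0)
    set g : ℝ × ℝ → ℝ := fun p => h p.1 with hg_def
    have hgm : Measurable g := hhm.comp measurable_fst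
    have hgb : ∃ C', ∀ p : ℝ × ℝ, |g p| ≤ C' := ⟨C, fun p => hC p.1⟩
    set G : Ω → ℝ := fun ω => h (Y0 ω) with hG_def
    have hGm : Measurable G := hhm.comp hY0
    have hGint : Integrable G P := by
      refine Integrable.mono' (integrable_const C) hGm.aestronglyMeasurable ?_
      exact Eventually.of_forall fun ω => by simpa [Real.norm_eq_abs, G] using hC (Y0 ω)
    -- condexp of D * G
    have hDG : P[(fun ω => D ω * G ω)|MeasurableSpace.comap X inferInstance] =ᵐ[P]
        fun ω => π (X ω) * (P[G|MeasurableSpace.comap X inferInstance]) ω := by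
      have h0 := hunconf f1 g hf1m hgm ⟨1, hf1b⟩ hgb
      have e1 : (fun ω => f1 (D ω) * g ((fun ω => (Y0 ω, Y1 ω)) ω))
          = fun ω => D ω * G ω := by
        funext ω; rw [congrFun hf1D ω]
      have e2 : (fun ω' => g ((fun ω => (Y0 ω, Y1 ω)) ω')) = G := rfl
      rw [e1, hf1D, e2] at h0
      refine h0.trans ?_
      filter_upwards [hπ] with ω hπω
      rw [← hπω]
    -- condexp of (1 - D) * G
    have h1DG : P[(fun ω => (1 - D ω) * G ω)|MeasurableSpace.comap X inferInstance] =ᵐ[P]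
        fun ω => (1 - π (X ω)) * (P[G|MeasurableSpace.comap X inferInstance]) ω := by
      have h0 := hunconf f2 g hf2m hgm ⟨2, hf2b⟩ hgb
      have e1 : (fun ω => f2 (D ω) * g ((fun ω => (Y0 ω, Y1 ω)) ω))
          = fun ω => (1 - D ω) * G ω := by
        funext ω; rw [congrFun hf2D ω]
      have e2 : (fun ω' => g ((fun ω => (Y0 ω, Y1 ω)) ω')) = G := rfl
      rw [e1, hf2D, e2] at h0
      refine h0.trans ?_
      filter_upwards [h1Dcond] with ω h1ω
      rw [h1ω]
    -- integrabilities
    have hDGint : Integrable (fun ω => D ω * G ω) P := hGint.bdd_mul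
      hD.aestronglyMeasurable (c := 1) (Eventually.of_forall fun ω => by simpa [Real.norm_eq_abs] using hDb ω)
    have h1DGint : Integrable (fun ω => (1 - D ω) * G ω) P := hGint.bdd_mul
      (measurable_const.sub hD).aestronglyMeasurable
      (c := 2) (Eventually.of_forall fun ω => by rcases hD01 ω with h' | h' <;> simp [h', Real.norm_eq_abs])
    have hψ1DGint : Integrable (fun ω => ψ ω * ((1 - D ω) * G ω)) P := by
      refine Integrable.mono' (integrable_const (Cψ * (2 * C)))
        (hψm.mul ((measurable_const.sub hD).mul hGm)).aestronglyMeasurable ?_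
      filter_upwards [hψb] with ω ⟨hψ0, hψC⟩
      have h1 : |1 - D ω| ≤ 2 := by rcases hD01 ω with h' | h' <;> simp [h']
      have h2 : |G ω| ≤ C := hC (Y0 ω)
      have hψa : |ψ ω| ≤ Cψ := by rw [abs_of_nonneg hψ0]; exact hψC
      calc ‖ψ ω * ((1 - D ω) * G ω)‖ = |ψ ω| * (|1 - D ω| * |G ω|) := by
            simp [Real.norm_eq_abs, abs_mul]
        _ ≤ Cψ * (2 * C) :=
            mul_le_mul hψa (mul_le_mul h1 h2 (abs_nonneg _) (by norm_num))
              (mul_nonneg (abs_nonneg _) (abs_nonneg _)) hCψ0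
    have hA : ∫ ω, D ω * G ω ∂P
        = ∫ ω, π (X ω) * (P[G|MeasurableSpace.comap X inferInstance]) ω ∂P := by
      rw [← integral_condExp hm (f := fun ω => D ω * G ω)]
      exact integral_congr_ae hDG
    have hψsm : StronglyMeasurable[MeasurableSpace.comap X inferInstance] ψ :=
      ((hπm.comp hXm).div (measurable_const.sub (hπm.comp hXm))).stronglyMeasurable
    have hpull : P[(fun ω => ψ ω * ((1 - D ω) * G ω))|MeasurableSpace.comap X inferInstance]
        =ᵐ[P] fun ω =>
          ψ ω * (P[(fun ω' => (1 - D ω') * G ω')|MeasurableSpace.comap X inferInstance]) ω :=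
      condExp_mul_of_stronglyMeasurable_left (μ := P) hψsm
        (g := fun ω => (1 - D ω) * G ω) hψ1DGint h1DGint
    have hB : ∫ ω, (1 - D ω) * G ω * ψ ω ∂P
        = ∫ ω, π (X ω) * (P[G|MeasurableSpace.comap X inferInstance]) ω ∂P := by
      have e1 : ∫ ω, (1 - D ω) * G ω * ψ ω ∂P = ∫ ω, ψ ω * ((1 - D ω) * G ω) ∂P := by
        apply integral_congr_ae; filter_upwards with ω; ring
      rw [e1, ← integral_condExp hm (f := fun ω => ψ ω * ((1 - D ω) * G ω))]
      apply integral_congr_ae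
      filter_upwards [hpull, h1DG, hπc] with ω h1 h2 ⟨hc1, hc2⟩
      rw [h1, h2]
      have hne : (1 : ℝ) - π (X ω) ≠ 0 := by linarith
      simp only [hψ_def]
      field_simp
    rw [hA, ← hB]
  -- truncation / dominated convergence
  have keyY0 : ∫ ω, D ω * Y0 ω ∂P = ∫ ω, (1 - D ω) * Y0 ω * ψ ω ∂P := by
    have t1 : Tendsto (fun n => ∫ ω, D ω * attTrunc n (Y0 ω) ∂P) atTop
        (nhds (∫ ω, D ω * Y0 ω ∂P)) := by
      refine tendsto_integral_of_dominated_convergence (fun ω => |Y0 ω|)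
        (fun n => (hD.mul ((attTrunc_measurable n).comp hY0)).aestronglyMeasurable)
        hY0int.abs ?_ ?_
      · intro n
        refine Eventually.of_forall fun ω => ?_
        calc ‖D ω * attTrunc n (Y0 ω)‖ = |D ω| * |attTrunc n (Y0 ω)| := by
              simp [Real.norm_eq_abs, abs_mul]
          _ ≤ 1 * |Y0 ω| :=
              mul_le_mul (hDb ω) (attTrunc_abs_le n (Y0 ω)) (abs_nonneg _) (by norm_num)
          _ = |Y0 ω| := one_mul _
      · exact Eventually.of_forall fun ω => tendsto_const_nhds.mul (attTrunc_tendsto (Y0 ω))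
    have t2 : Tendsto (fun n => ∫ ω, (1 - D ω) * attTrunc n (Y0 ω) * ψ ω ∂P) atTop
        (nhds (∫ ω, (1 - D ω) * Y0 ω * ψ ω ∂P)) := by
      refine tendsto_integral_of_dominated_convergence (fun ω => 2 * Cψ * |Y0 ω|)
        (fun n => (((measurable_const.sub hD).mul ((attTrunc_measurable n).comp hY0)).mul
          hψm).aestronglyMeasurable) (((hY0int.abs.const_mul Cψ).const_mul 2).congr ?_) ?_ ?_
      · refine Eventually.of_forall fun ω => ?_; ring
      · intro n
        filter_upwards [hψb] with ω ⟨hψ0, hψC⟩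
        have h1 : |1 - D ω| ≤ 2 := by rcases hD01 ω with h' | h' <;> simp [h']
        have hψa : |ψ ω| ≤ Cψ := by rw [abs_of_nonneg hψ0]; exact hψC
        calc ‖(1 - D ω) * attTrunc n (Y0 ω) * ψ ω‖
            = |1 - D ω| * |attTrunc n (Y0 ω)| * |ψ ω| := by simp [Real.norm_eq_abs, abs_mul]
          _ ≤ 2 * |Y0 ω| * Cψ :=
              mul_le_mul (mul_le_mul h1 (attTrunc_abs_le n (Y0 ω)) (abs_nonneg _) (by norm_num))
                hψa (abs_nonneg _) (by positivity)
          _ = 2 * Cψ * |Y0 ω| := by ring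
      · exact Eventually.of_forall fun ω =>
          (tendsto_const_nhds.mul (attTrunc_tendsto (Y0 ω))).mul tendsto_const_nhds
    have heq : ∀ n, ∫ ω, D ω * attTrunc n (Y0 ω) ∂P
        = ∫ ω, (1 - D ω) * attTrunc n (Y0 ω) * ψ ω ∂P :=
      fun n => key (attTrunc n) (attTrunc_measurable n) ⟨n, attTrunc_abs_le_n n⟩
    exact tendsto_nhds_unique (t1.congr fun n => heq n) t2
  -- integrabilities for the final computation
  have hDY1int : Integrable (fun ω => D ω * Y1 ω) P := hY1int.bdd_mul
    hD.aestronglyMeasurable (c := 1) (Eventually.of_forall fun ω => by simpa [Real.norm_eq_abs] using hDb ω)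
  have hDY0int : Integrable (fun ω => D ω * Y0 ω) P := hY0int.bdd_mul
    hD.aestronglyMeasurable (c := 1) (Eventually.of_forall fun ω => by simpa [Real.norm_eq_abs] using hDb ω)
  have h1DY0ψint : Integrable (fun ω => (1 - D ω) * Y0 ω * ψ ω) P := by
    refine Integrable.mono' ((hY0int.abs.const_mul Cψ).const_mul 2)
      (((measurable_const.sub hD).mul hY0).mul hψm).aestronglyMeasurable ?_
    filter_upwards [hψb] with ω ⟨hψ0, hψC⟩
    have h1 : |1 - D ω| ≤ 2 := by rcases hD01 ω with h' | h' <;> simp [h']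
    have hψa : |ψ ω| ≤ Cψ := by rw [abs_of_nonneg hψ0]; exact hψC
    calc ‖(1 - D ω) * Y0 ω * ψ ω‖ = |1 - D ω| * |Y0 ω| * |ψ ω| := by
          simp [Real.norm_eq_abs, abs_mul]
      _ ≤ 2 * |Y0 ω| * Cψ :=
          mul_le_mul (mul_le_mul h1 le_rfl (abs_nonneg _) (by norm_num)) hψa
            (abs_nonneg _) (by positivity)
      _ = 2 * (Cψ * |Y0 ω|) := by ring
  -- LHS: conditional expectation as normalized restricted integral
  set s : Set Ω := {ω | D ω = 1} with hs_def
  have hsm : MeasurableSet s := hD (measurableSet_singleton 1)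
  have hLHS : ∫ ω, (Y1 ω - Y0 ω) ∂(ProbabilityTheory.cond P s)
      = (1 / (P s).toReal) * ∫ ω, D ω * (Y1 ω - Y0 ω) ∂P := by
    rw [show ProbabilityTheory.cond P s = (P s)⁻¹ • P.restrict s from rfl,
      integral_smul_measure, ← integral_indicator hsm]
    have e : s.indicator (fun ω => Y1 ω - Y0 ω) = fun ω => D ω * (Y1 ω - Y0 ω) := by
      funext ω
      rcases hD01 ω with h | h
      · rw [Set.indicator_of_notMem (by simp [hs_def, h]), h]; ring
      · rw [Set.indicator_of_mem (by simp [hs_def, h]), h]; ring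
    rw [e, ENNReal.toReal_inv, smul_eq_mul, one_div]
  rw [hLHS]
  congr 1
  have hR : (fun ω => D ω * (D ω * Y1 ω + (1 - D ω) * Y0 ω)
      - (1 - D ω) * (D ω * Y1 ω + (1 - D ω) * Y0 ω) * π (X ω) / (1 - π (X ω)))
      = fun ω => D ω * Y1 ω - (1 - D ω) * Y0 ω * ψ ω := by
    funext ω
    simp only [hψ_def]
    rcases hD01 ω with h | h <;> rw [h] <;> ring
  rw [hR]
  have hL : ∫ ω, D ω * (Y1 ω - Y0 ω) ∂P
      = ∫ ω, D ω * Y1 ω ∂P - ∫ ω, D ω * Y0 ω ∂P := by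
    rw [← integral_sub hDY1int hDY0int]
    apply integral_congr_ae
    filter_upwards with ω
    ring
  rw [hL, integral_sub hDY1int h1DY0ψint, keyY0]
end
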